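/- The set D_m of nonempty m-Dyck paths, equipped with the product *, is a monoid with unit 1·0^m which is free on the set of generators D(w₁,…,w_{i−1},1·0^m,∅,…,∅), where 1 ≤ i ≤ m+1 and w₁,…,w_{i−1} range over all (possibly empty) m-Dyck paths: every element of D_m can be written in a unique way as a product of a finite sequence of these generators. -/

import Mathlib

/-! Words over `Bool` encode lattice paths: `true` = up step (letter 1),
`false` = down step (letter 0). -/

/-- `w` is an `m`-Dyck word: the number of 0's is `m` times the number of 1's,
and every prefix `p` satisfies `m·|p|₁ ≥ |p|₀`.  (The empty word is allowed;
an `m`-Dyck path of size `n` is an `m`-Dyck word with `n` letters 1.) -/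
def IsDyck (m : ℕ) (w : List Bool) : Prop :=
  w.count false = m * w.count true ∧
  ∀ p : List Bool, p <+: w → p.count false ≤ m * p.count true

/-- Cover relation of the greedy `m`-Tamari order: swap a valley's down step with
the *longest* Dyck factor that follows it. -/
def GreedyCover (m : ℕ) (w w' : List Bool) : Prop :=
  ∃ u d v : List Bool, d ≠ [] ∧ IsDyck m d ∧
    w = u ++ false :: (d ++ v) ∧
    w' = u ++ d ++ false :: v ∧
    ∀ d' : List Bool, d' <+: d ++ v → IsDyck m d' → d'.length ≤ d.length

/-- The greedy `m`-Tamari order (reflexive-transitive closure of the cover relation). -/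
def GreedyLe (m : ℕ) : List Bool → List Bool → Prop :=
  Relation.ReflTransGen (GreedyCover m)

/-- Cover relation of the ordinary `m`-Tamari order: swap a valley's down step with
the *shortest nonempty* Dyck factor that follows it. -/
def OrdCover (m : ℕ) (w w' : List Bool) : Prop :=
  ∃ u d v : List Bool, d ≠ [] ∧ IsDyck m d ∧
    w = u ++ false :: (d ++ v) ∧
    w' = u ++ d ++ false :: v ∧
    ∀ d' : List Bool, d' <+: d ++ v → IsDyck m d' → d' ≠ [] → d.length ≤ d'.length

/-- The ordinary `m`-Tamari order. -/
def OrdLe (m : ℕ) : List Bool → List Bool → Prop :=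
  Relation.ReflTransGen (OrdCover m)

/-- The word `1·0^m` (a single peak), unit of the monoid `(D_m, *)`. -/
def peakWord (m : ℕ) : List Bool := true :: List.replicate m false

/-- Length of the final descent: the longest suffix of the form `0^k`. -/
def finalDescent (w : List Bool) : ℕ := (w.reverse.takeWhile (fun b => !b)).length

/-- The product `w₁ * w₂` on nonempty `m`-Dyck words: replace the rightmost peak
(the last up step together with the `m` down steps following it) of `w₁` by `w₂`. -/
def star (m : ℕ) (w₁ w₂ : List Bool) : List Bool :=
  w₁.take (w₁.length - (finalDescent w₁ + 1)) ++ w₂ ++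
    List.replicate (finalDescent w₁ - m) false

/-- Delete the last peak (the last up step and the `m` down steps following it). -/
def delPeak (m : ℕ) (w : List Bool) : List Bool :=
  w.take (w.length - (finalDescent w + 1)) ++ List.replicate (finalDescent w - m) false

/-- `D(w₀, …, w_m) = 1 (w₀ 0) (w₁ 0) ⋯ (w_{m-1} 0) w_m` : the canonical
decomposition of nonempty `m`-Dyck words (components indexed by `Fin (m+1)`). -/
def Dpath (m : ℕ) (ws : Fin (m+1) → List Bool) : List Bool :=
  true :: ((List.ofFn fun j : Fin m => ws j.castSucc ++ [false]).flatten ++ ws (Fin.last m))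

/-- Generators of the free monoid `(D_m, *)` : the words
`D(w₁,…,w_{i−1}, 1·0^m, ∅,…,∅)` with Dyck (possibly empty) components before
position `i`. -/
def IsGenerator (m : ℕ) (g : List Bool) : Prop :=
  ∃ i : Fin (m+1), ∃ ws : Fin (m+1) → List Bool,
    (∀ j, IsDyck m (ws j)) ∧ ws i = peakWord m ∧
    (∀ j : Fin (m+1), i < j → ws j = []) ∧ g = Dpath m ws

/-- A prime (no contact) nonempty `m`-Dyck word: no proper nonempty prefix `p`
satisfies `m·|p|₁ = |p|₀`. -/
def IsPrimePath (m : ℕ) (w : List Bool) : Prop :=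
  IsDyck m w ∧ w ≠ [] ∧
  ∀ p : List Bool, p <+: w → p ≠ [] → p ≠ w → p.count false ≠ m * p.count true

namespace DyckAux


/-- count true + count false = length, for Bool lists -/
lemma count_true_add_count_false (w : List Bool) :
    w.count true + w.count false = w.length := by
  induction w with
  | nil => simp
  | cons b t ih => cases b <;> simp [List.count_cons] <;> omega

lemma prefix_append_cases {α : Type*} {p a b : List α} (h : p <+: a ++ b) :
    p <+: a ∨ ∃ q, q <+: b ∧ p = a ++ q := by
  rcases le_or_gt p.length a.length with h' | h'
  · exact Or.inl (List.prefix_of_prefix_length_le h (List.prefix_append a b) h')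
  · have ha : a <+: p := List.prefix_of_prefix_length_le (List.prefix_append a b) h h'.le
    obtain ⟨q, rfl⟩ := ha
    obtain ⟨r, hr⟩ := h
    rw [List.append_assoc] at hr
    have : q ++ r = b := List.append_cancel_left hr
    exact Or.inr ⟨q, ⟨r, this⟩, rfl⟩

lemma prefix_replicate {α : Type*} {p : List α} {n : ℕ} {a : α}
    (h : p <+: List.replicate n a) : p = List.replicate p.length a ∧ p.length ≤ n := by
  constructor
  · exact List.eq_replicate_of_mem (fun b hb => List.eq_of_mem_replicate (h.subset hb))
  · simpa using h.length_le

lemma takeWhile_replicate_append {l : List Bool} {k : ℕ} :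
    (List.replicate k false ++ true :: l).takeWhile (fun b => !b) = List.replicate k false := by
  induction k with
  | zero => simp [List.takeWhile_cons]
  | succ n ih => simp [List.replicate_succ, List.takeWhile_cons, ih]

lemma finalDescent_eq (u : List Bool) (k : ℕ) :
    finalDescent (u ++ true :: List.replicate k false) = k := by
  unfold finalDescent
  rw [List.reverse_append, List.reverse_cons, List.reverse_replicate, List.append_assoc]
  simp [takeWhile_replicate_append]

lemma star_shape (m : ℕ) (u v : List Bool) (k : ℕ) :
    _root_.star m (u ++ true :: List.replicate k false) v = u ++ v ++ List.replicate (k - m) false := by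
  unfold _root_.star
  rw [finalDescent_eq]
  have hlen : (u ++ true :: List.replicate k false).length = u.length + (k + 1) := by
    simp
  rw [hlen]
  have : u.length + (k + 1) - (k + 1) = u.length := by omega
  rw [this, List.take_append_of_le_length le_rfl, List.take_length]

/-- Structure of a nonempty Dyck word. -/
lemma dyck_shape {m : ℕ} {w : List Bool} (hw : IsDyck m w) (hne : w ≠ []) :
    ∃ u k, m ≤ k ∧ w = u ++ true :: List.replicate k false ∧
      u.count false + k = m * u.count true + m := by
  have hct : 1 ≤ w.count true := by
    by_contra h
    have h0 : w.count true = 0 := by omega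
    have := count_true_add_count_false w
    have hcf := hw.1
    rw [h0] at hcf
    have : w.length = 0 := by omega
    exact hne (List.length_eq_zero_iff.mp this)
  -- w contains true; decompose from the right
  have hmem : true ∈ w.reverse := by
    rw [List.mem_reverse]
    exact List.count_pos_iff.mp (by omega)
  set r := w.reverse with hr
  have hdw : r.dropWhile (fun b => !b) ≠ [] := by
    intro h
    have : r.takeWhile (fun b => !b) = r := by
      have := List.takeWhile_append_dropWhile (p := fun b => !b) (l := r)
      rw [h] at this; simpa using this
    have : ∀ b ∈ r, (fun b => !b) b = true := by
      rw [← this]; intro b hb; exact List.mem_takeWhile_imp hb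
    have := this true hmem
    simp at this
  obtain ⟨b, t, hbt⟩ := List.exists_cons_of_ne_nil hdw
  have hb : b = true := by
    have h1 := List.head_dropWhile_not (p := fun b => !b) (l := r) hdw
    have h2 : (r.dropWhile (fun b => !b)).head hdw = b := by
      simp [hbt]
    rw [h2] at h1
    simpa using h1
  subst hb
  set a := r.takeWhile (fun b => !b) with hada
  have hrdec : r = a ++ true :: t := by
    rw [hada, ← hbt, List.takeWhile_append_dropWhile]
  have haf : a = List.replicate a.length false := by
    apply List.eq_replicate_of_mem
    intro c hc
    have := List.mem_takeWhile_imp (p := fun b => !b) (l := r) (by rw [← hada]; exact hc)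
    simpa using this
  have hw' : w = t.reverse ++ true :: List.replicate a.length false := by
    have : w = r.reverse := by simp [hr]
    rw [this, hrdec, haf]
    simp [List.reverse_replicate]
  refine ⟨t.reverse, a.length, ?_, hw', ?_⟩
  · -- k ≥ m via counts
    have hcfw : w.count false = t.reverse.count false + a.length := by
      rw [hw']; simp [List.count_append, List.count_cons, List.count_replicate]
    have hctw : w.count true = t.reverse.count true + 1 := by
      rw [hw']; simp [List.count_append, List.count_cons, List.count_replicate]
    have hpre : t.reverse.count false ≤ m * t.reverse.count true :=
      hw.2 _ ⟨true :: List.replicate a.length false, hw'.symm⟩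
    have := hw.1
    rw [hcfw, hctw] at this
    nlinarith
  · have hcfw : w.count false = t.reverse.count false + a.length := by
      rw [hw']; simp [List.count_append, List.count_cons, List.count_replicate]
    have hctw : w.count true = t.reverse.count true + 1 := by
      rw [hw']; simp [List.count_append, List.count_cons, List.count_replicate]
    have := hw.1
    rw [hcfw, hctw] at this
    nlinarith






/-- blocks word -/
def Bl (L : List (List Bool)) : List Bool := (L.map (fun v => v ++ [false])).flatten

@[simp] lemma Bl_nil : Bl [] = [] := rfl

@[simp] lemma Bl_cons (v : List Bool) (T : List (List Bool)) :
    Bl (v :: T) = v ++ false :: Bl T := by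
  simp [Bl]

lemma Bl_append (A B : List (List Bool)) : Bl (A ++ B) = Bl A ++ Bl B := by
  simp [Bl]

lemma Bl_replicate_nil (s : ℕ) : Bl (List.replicate s ([] : List Bool)) = List.replicate s false := by
  induction s with
  | zero => simp
  | succ n ih => simp [List.replicate_succ, ih]

lemma peak_dyck (m : ℕ) : IsDyck m (peakWord m) := by
  constructor
  · simp [peakWord, List.count_cons, List.count_replicate]
  · intro p hp
    rw [peakWord] at hp
    rcases p with _ | ⟨b, q⟩
    · simp
    · rw [List.cons_prefix_cons] at hp
      obtain ⟨rfl, hq⟩ := hp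
      obtain ⟨hrep, hlen⟩ := prefix_replicate hq
      rw [hrep]
      simp [List.count_cons, List.count_replicate]
      omega

lemma empty_dyck (m : ℕ) : IsDyck m ([] : List Bool) :=
  ⟨by simp, fun p hp => by simp [List.prefix_nil.mp hp]⟩

/-- counting and prefix bounds for block words -/
lemma bl_bound (m : ℕ) : ∀ (L : List (List Bool)) (vl : List Bool),
    (∀ v ∈ L, IsDyck m v) → IsDyck m vl →
    ((Bl L ++ vl).count false = m * (Bl L ++ vl).count true + L.length ∧
     ∀ p : List Bool, p <+: Bl L ++ vl →
       p.count false ≤ m * p.count true + L.length) := by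
  intro L
  induction L with
  | nil =>
    intro vl _ hvl
    constructor
    · simpa using hvl.1
    · intro p hp
      simp only [Bl_nil, List.nil_append] at hp
      simpa using hvl.2 p hp
  | cons v T ih =>
    intro vl hL hvl
    have hv : IsDyck m v := hL v (by simp)
    have hT : ∀ x ∈ T, IsDyck m x := fun x hx => hL x (by simp [hx])
    obtain ⟨ihc, ihp⟩ := ih vl hT hvl
    constructor
    · simp only [Bl_cons, List.append_assoc, List.cons_append, List.count_append,
        List.count_cons, hv.1]
      simp only [List.count_append] at ihc
      simp [Nat.mul_add] at ihc ⊢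
      omega
    · intro p hp
      simp only [Bl_cons, List.append_assoc, List.cons_append] at hp
      rw [show v ++ false :: (Bl T ++ vl) = v ++ (false :: (Bl T ++ vl)) from rfl] at hp
      rcases prefix_append_cases hp with hpv | ⟨q, hq, rfl⟩
      · have := hv.2 p hpv
        simp
        omega
      · rcases q with _ | ⟨b, q'⟩
        · simp only [List.append_nil]
          have := hv.2 v (List.prefix_refl v)
          simp
          omega
        · rw [List.cons_prefix_cons] at hq
          obtain ⟨rfl, hq'⟩ := hq
          have h1 := ihp q' hq'
          have h2 := hv.1
          simp only [List.count_append, List.count_cons]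
          simp [Nat.mul_add]
          omega

/-- the composed word is Dyck -/
lemma dyck_word (m : ℕ) (L : List (List Bool)) (vl : List Bool)
    (hlen : L.length = m) (hL : ∀ v ∈ L, IsDyck m v) (hvl : IsDyck m vl) :
    IsDyck m (true :: (Bl L ++ vl)) := by
  obtain ⟨hc, hp⟩ := bl_bound m L vl hL hvl
  constructor
  · simp only [List.count_cons, List.count_append] at hc ⊢
    simp [Nat.mul_add] at hc ⊢
    omega
  · intro p hpre
    rcases p with _ | ⟨b, q⟩
    · simp
    · rw [List.cons_prefix_cons] at hpre
      obtain ⟨rfl, hq⟩ := hpre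
      have := hp q hq
      simp [List.count_cons, Nat.mul_add]
      omega

/-- first return decomposition of a word at height level c -/
lemma first_block (m : ℕ) {c : ℕ} (hc : 1 ≤ c) (X : List Bool)
    (hX : X.count false = m * X.count true + c)
    (hpre : ∀ p : List Bool, p <+: X → p.count false ≤ m * p.count true + c) :
    ∃ v Y, IsDyck m v ∧ X = v ++ false :: Y ∧
      Y.count false = m * Y.count true + (c - 1) ∧
      ∀ p : List Bool, p <+: Y → p.count false ≤ m * p.count true + (c - 1) := by
  have hex : ∃ j, (X.take j).count false > m * (X.take j).count true := by
    exact ⟨X.length, by rw [List.take_length]; omega⟩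
  classical
  set j := Nat.find hex with hj
  have hQ : (X.take j).count false > m * (X.take j).count true := Nat.find_spec hex
  have hjle : j ≤ X.length := Nat.find_min' hex (by rw [List.take_length]; omega)
  have hj0 : j ≠ 0 := by
    intro h
    rw [h] at hQ
    simp at hQ
  have hmin : ∀ j' < j, (X.take j').count false ≤ m * (X.take j').count true := by
    intro j' hj'
    have := Nat.find_min hex hj'
    omega
  have hj1 : j - 1 < X.length := by omega
  have htake : X.take j = X.take (j-1) ++ [X[j-1]] := by
    have hjj : j = (j-1) + 1 := by omega
    conv_lhs => rw [hjj, List.take_succ]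
    rw [List.getElem?_eq_getElem hj1]
    rfl
  have hprev := hmin (j-1) (by omega)
  have hfalse : X[j-1] = false := by
    by_contra h
    have h' : X[j-1] = true := by revert h; cases X[j-1] <;> simp
    rw [htake, h'] at hQ
    simp only [List.count_append, List.count_cons, List.count_nil] at hQ
    simp [Nat.mul_succ] at hQ
    omega
  rw [htake, hfalse] at hQ
  simp only [List.count_append, List.count_cons, List.count_nil] at hQ
  simp at hQ
  have heq : (X.take (j-1)).count false = m * (X.take (j-1)).count true := by omega
  have h2 : X = X.take (j-1) ++ false :: X.drop j := by
    conv_lhs => rw [← List.take_append_drop j X]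
    rw [htake, hfalse]
    simp
  have hcntf : X.count false = (X.take (j-1)).count false + 1 + (X.drop j).count false := by
    conv_lhs => rw [h2]
    simp [List.count_append, List.count_cons]
    omega
  have hcntt : X.count true = (X.take (j-1)).count true + (X.drop j).count true := by
    conv_lhs => rw [h2]
    simp [List.count_append, List.count_cons]
  have e1 : m * X.count true
      = m * (X.take (j-1)).count true + m * (X.drop j).count true := by
    rw [hcntt, Nat.mul_add]
  refine ⟨X.take (j-1), X.drop j, ?_, h2, ?_, ?_⟩
  · constructor
    · exact heq
    · intro p hp
      have hpX : p <+: X := hp.trans (List.take_prefix _ _)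
      have hplen : p.length ≤ j - 1 := by
        simpa [Nat.min_eq_left (show j-1 ≤ X.length by omega)] using hp.length_le
      have hpeq : p = X.take p.length := by
        obtain ⟨r, hr⟩ := hpX
        rw [← hr]
        simp
      rcases eq_or_lt_of_le hplen with heq' | hlt
      · rw [hpeq, heq']; omega
      · rw [hpeq]; exact hmin _ (by omega)
  · omega
  · intro p hp
    obtain ⟨r, hr⟩ := hp
    have hfull : (X.take (j-1) ++ false :: p) <+: X := by
      refine ⟨r, ?_⟩
      conv_rhs => rw [h2]
      rw [← hr]
      simp
    have h3 := hpre _ hfull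
    have h4 : (X.take (j-1) ++ false :: p).count false
        = (X.take (j-1)).count false + 1 + p.count false := by
      simp [List.count_append, List.count_cons]
      omega
    have h5 : m * (X.take (j-1) ++ false :: p).count true
        = m * (X.take (j-1)).count true + m * p.count true := by
      simp [List.count_append, List.count_cons, Nat.mul_add]
    omega

/-- iterated decomposition -/
lemma exists_blocks (m : ℕ) : ∀ (c : ℕ) (X : List Bool),
    X.count false = m * X.count true + c →
    (∀ p : List Bool, p <+: X → p.count false ≤ m * p.count true + c) →
    ∃ (L : List (List Bool)) (vl : List Bool), L.length = c ∧
      (∀ v ∈ L, IsDyck m v) ∧ IsDyck m vl ∧ X = Bl L ++ vl := by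
  intro c
  induction c with
  | zero =>
    intro X hX hp
    exact ⟨[], X, rfl, by simp, ⟨by simpa using hX, fun p h => by simpa using hp p h⟩, by simp⟩
  | succ n ih =>
    intro X hX hp
    obtain ⟨v, Y, hv, rfl, hY1, hY2⟩ := first_block m (by omega) X hX hp
    simp only [Nat.add_sub_cancel] at hY1 hY2
    obtain ⟨L, vl, hlen, hL, hvl, rfl⟩ := ih Y hY1 hY2
    refine ⟨v :: L, vl, by simp [hlen], ?_, hvl, by simp⟩
    intro x hx
    rcases List.mem_cons.mp hx with rfl | hx'
    · exact hv
    · exact hL x hx'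

/-- decomposition of a nonempty Dyck word -/
lemma dyck_decomp {m : ℕ} {w : List Bool} (hw : IsDyck m w) (hne : w ≠ []) :
    ∃ (L : List (List Bool)) (vl : List Bool), L.length = m ∧
      (∀ v ∈ L, IsDyck m v) ∧ IsDyck m vl ∧ w = true :: (Bl L ++ vl) := by
  obtain ⟨b, X, rfl⟩ := List.exists_cons_of_ne_nil hne
  have hb : b = true := by
    by_contra h
    have h' : b = false := by revert h; cases b <;> simp
    subst h'
    have := hw.2 [false] ⟨X, rfl⟩
    simp at this
  subst hb
  have hX : X.count false = m * X.count true + m := by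
    have := hw.1
    simp [List.count_cons, Nat.mul_add] at this ⊢
    omega
  have hXp : ∀ p : List Bool, p <+: X → p.count false ≤ m * p.count true + m := by
    intro p hp
    have := hw.2 (true :: p) (by rw [List.cons_prefix_cons]; exact ⟨rfl, hp⟩)
    simp [List.count_cons, Nat.mul_add] at this ⊢
    omega
  obtain ⟨L, vl, hlen, hL, hvl, rfl⟩ := exists_blocks m m X hX hXp
  exact ⟨L, vl, hlen, hL, hvl, rfl⟩








/-- closure of Dyck under star, explicit shape version -/
lemma star_closure {m : ℕ} {w₁ w₂ : List Bool} (h1 : IsDyck m w₁) (hn1 : w₁ ≠ [])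
    (h2 : IsDyck m w₂) (hn2 : w₂ ≠ []) :
    IsDyck m (star m w₁ w₂) ∧ star m w₁ w₂ ≠ [] := by
  obtain ⟨u, k, hmk, rfl, hbal⟩ := dyck_shape h1 hn1
  rw [star_shape]
  have hupre : ∀ p : List Bool, p <+: u → p.count false ≤ m * p.count true := by
    intro p hp
    exact h1.2 p (hp.trans (List.prefix_append _ _))
  constructor
  · constructor
    · simp only [List.count_append, List.count_replicate, h2.1]
      simp [Nat.mul_add]
      omega
    · intro p hp
      rw [List.append_assoc] at hp
      rcases prefix_append_cases hp with hpu | ⟨q, hq, rfl⟩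
      · exact hupre p hpu
      · rcases prefix_append_cases hq with hqv | ⟨r, hr, rfl⟩
        · have := h2.2 q hqv
          simp only [List.count_append]
          nlinarith
        · obtain ⟨hrrep, hrlen⟩ := prefix_replicate hr
          rw [hrrep]
          obtain ⟨hrlen2, _⟩ := prefix_replicate hr
          simp only [List.count_append, List.count_replicate, h2.1]
          simp [Nat.mul_add]
          have : r.length ≤ k - m := by simpa using hr.length_le
          omega
  · intro h
    simp only [List.append_assoc, List.append_eq_nil_iff] at h
    exact hn2 h.2.1

lemma star_peak_left {m : ℕ} {w : List Bool} :
    star m (peakWord m) w = w := by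
  have : peakWord m = [] ++ true :: List.replicate m false := by simp [peakWord]
  rw [this, star_shape]
  simp

lemma star_peak_right {m : ℕ} {w : List Bool} (hw : IsDyck m w) (hne : w ≠ []) :
    star m w (peakWord m) = w := by
  obtain ⟨u, k, hmk, rfl, -⟩ := dyck_shape hw hne
  rw [star_shape]
  simp only [peakWord, List.append_assoc, List.cons_append]
  congr 1
  congr 1
  rw [← List.replicate_add]
  congr 1
  omega

lemma star_assoc {m : ℕ} {a b c : List Bool} (ha : IsDyck m a) (hna : a ≠ [])
    (hb : IsDyck m b) (hnb : b ≠ []) :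
    star m (star m a b) c = star m a (star m b c) := by
  obtain ⟨ua, ka, hka, rfl, -⟩ := dyck_shape ha hna
  obtain ⟨ub, kb, hkb, rfl, -⟩ := dyck_shape hb hnb
  rw [star_shape, star_shape]
  have h1 : ua ++ (ub ++ true :: List.replicate kb false) ++ List.replicate (ka - m) false
      = (ua ++ ub) ++ true :: List.replicate (kb + (ka - m)) false := by
    simp only [List.append_assoc, List.cons_append]
    congr 3
    rw [List.replicate_add]
  rw [h1, star_shape, star_shape]
  simp only [List.append_assoc]
  congr 2
  congr 1
  rw [← List.replicate_add]
  congr 1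
  omega





lemma ct_pos {m : ℕ} {w : List Bool} (hw : IsDyck m w) (hne : w ≠ []) :
    1 ≤ w.count true := by
  by_contra h
  have h0 : w.count true = 0 := by omega
  have h1 := hw.1
  have h2 := count_true_add_count_false w
  rw [h0] at h1 h2
  exact hne (List.length_eq_zero_iff.mp (by omega))

/-- a Dyck word cannot have `v ++ [false]` as a prefix with `v` Dyck -/
lemma no_dyck_false_prefix {m : ℕ} {d v : List Bool} (hd : IsDyck m d)
    (hv : IsDyck m v) (h : v ++ [false] <+: d) : False := by
  have := hd.2 _ h
  simp [List.count_append, hv.1] at this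

/-- two Dyck words followed by a false marker matching -/
lemma dyck_head_eq {m : ℕ} {v v' Z Z' : List Bool} (hv : IsDyck m v) (hv' : IsDyck m v')
    (h : v ++ false :: Z = v' ++ false :: Z') : v = v' ∧ Z = Z' := by
  have hvp : v <+: v' ++ false :: Z' := h ▸ List.prefix_append v (false :: Z)
  have hv'p : v' <+: v' ++ false :: Z' := List.prefix_append _ _
  have hlen : v.length = v'.length := by
    by_contra hne
    rcases Nat.lt_or_ge v.length v'.length with hlt | hge
    · -- v ++ [false] <+: v'
      have h1 : v ++ [false] <+: v' ++ false :: Z' := by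
        refine ⟨Z, by simpa using h⟩
      have h2 : v ++ [false] <+: v' :=
        List.prefix_of_prefix_length_le h1 hv'p (by simp; omega)
      exact absurd h2 (fun hh => no_dyck_false_prefix hv' hv hh)
    · have hlt : v'.length < v.length := by omega
      have h1 : v' ++ [false] <+: v' ++ false :: Z' := ⟨Z', by simp⟩
      have h2 : v' ++ [false] <+: v :=
        List.prefix_of_prefix_length_le h1 hvp (by simp; omega)
      exact absurd h2 (fun hh => no_dyck_false_prefix hv hv' hh)
  have hveq : v = v' := by
    have := List.prefix_of_prefix_length_le hvp hv'p (by omega)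
    exact List.IsPrefix.eq_of_length this hlen
  subst hveq
  refine ⟨rfl, ?_⟩
  have := List.append_cancel_left h
  simpa using this

lemma blocks_matching (m : ℕ) : ∀ (L L' : List (List Bool)), L.length = L'.length →
    (∀ v ∈ L, IsDyck m v) → (∀ v ∈ L', IsDyck m v) →
    ∀ X X' : List Bool, Bl L ++ X = Bl L' ++ X' → L = L' ∧ X = X' := by
  intro L
  induction L with
  | nil =>
    intro L' hlen _ _ X X' h
    have : L' = [] := List.length_eq_zero_iff.mp hlen.symm
    subst this
    exact ⟨rfl, by simpa [Bl_nil] using h⟩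
  | cons v T ih =>
    intro L' hlen hL hL' X X' h
    rcases L' with _ | ⟨v', T'⟩
    · simp at hlen
    · rw [Bl_cons, Bl_cons] at h
      simp only [List.append_assoc, List.cons_append] at h
      have h' : v ++ false :: (Bl T ++ X) = v' ++ false :: (Bl T' ++ X') := by
        simpa using h
      obtain ⟨rfl, htail⟩ := dyck_head_eq (hL v (by simp)) (hL' v' (by simp)) h'
      obtain ⟨rfl, hX⟩ := ih T' (by simpa using hlen)
        (fun x hx => hL x (by simp [hx])) (fun x hx => hL' x (by simp [hx])) X X' htail
      exact ⟨rfl, hX⟩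

/-- auxiliary: pair uniqueness assuming i ≤ i' -/
lemma pair_unique_aux (m : ℕ) {i i' : ℕ} (hi : i ≤ m) (hi' : i' ≤ m) (hii : i ≤ i')
    {pre pre' : List (List Bool)} (hlen : pre.length = i) (hlen' : pre'.length = i')
    (hd : ∀ v ∈ pre, IsDyck m v) (hd' : ∀ v ∈ pre', IsDyck m v)
    {w' w'' : List Bool} (hw' : IsDyck m w') (hnw' : w' ≠ [])
    (hw'' : IsDyck m w'') (hnw'' : w'' ≠ [])
    (heq : Bl pre ++ w' ++ List.replicate (m - i) false
         = Bl pre' ++ w'' ++ List.replicate (m - i') false) :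
    i = i' ∧ pre = pre' ∧ w' = w'' := by
  have hsplit : Bl pre' = Bl (pre'.take i) ++ Bl (pre'.drop i) := by
    rw [← Bl_append, List.take_append_drop]
  have htlen : (pre'.take i).length = i := by
    simp [hlen']; omega
  rw [hsplit] at heq
  simp only [List.append_assoc] at heq
  obtain ⟨hpre, hX⟩ := blocks_matching m pre (pre'.take i) (by rw [hlen, htlen])
    hd (fun x hx => hd' x (List.mem_of_mem_take hx)) _ _ heq
  have hieq : i = i' := by
    by_contra hne
    have hii' : i < i' := by omega
    have hdrop : pre'.drop i ≠ [] := by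
      intro hd0
      have : (pre'.drop i).length = pre'.length - i := List.length_drop
      rw [hd0, hlen'] at this
      simp at this
      omega
    obtain ⟨v, T, hvT⟩ := List.exists_cons_of_ne_nil hdrop
    rw [hvT, Bl_cons] at hX
    simp only [List.append_assoc, List.cons_append] at hX
    -- hX : w' ++ rep (m-i) = v ++ false :: (Bl T ++ (w'' ++ rep (m-i')))
    have hvD : IsDyck m v := hd' v (by
      have : v ∈ pre'.drop i := by rw [hvT]; simp
      exact List.mem_of_mem_drop this)
    have hE := hX
    rcases Nat.lt_or_ge v.length w'.length with hlt | hge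
    · -- v ++ [false] <+: w'
      have h1 : v ++ [false] <+: w' ++ List.replicate (m-i) false := by
        rw [hE]
        exact ⟨Bl T ++ (w'' ++ List.replicate (m-i') false), by simp⟩
      have h2 : v ++ [false] <+: w' :=
        List.prefix_of_prefix_length_le h1 (List.prefix_append _ _) (by simp; omega)
      exact no_dyck_false_prefix hw' hvD h2
    · -- w' <+: v
      have hv_pref : v <+: w' ++ List.replicate (m-i) false := by
        rw [hE]
        exact ⟨false :: (Bl T ++ (w'' ++ List.replicate (m-i') false)), by simp⟩
      have h1 : w' <+: v :=
        List.prefix_of_prefix_length_le (List.prefix_append _ _) hv_pref hge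
      obtain ⟨r, hr⟩ := h1
      rcases r with _ | ⟨b, r'⟩
      · -- v = w', then rep (m-i) = false :: ...
        rw [List.append_nil] at hr
        subst hr
        have h3 : List.replicate (m-i) false
            = false :: (Bl T ++ (w'' ++ List.replicate (m-i') false)) :=
          List.append_cancel_left hE
        have h4 : true ∈ w'' := List.count_pos_iff.mp (ct_pos hw'' hnw'')
        have h5 : true ∈ List.replicate (m-i) false := by
          rw [h3]; simp [h4]
        simpa using List.eq_of_mem_replicate h5
      · -- v = w' ++ b :: r'
        have h3 : List.replicate (m-i) false
            = (b :: r') ++ false :: (Bl T ++ (w'' ++ List.replicate (m-i') false)) := by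
          apply List.append_cancel_left (as := w')
          rw [hE, ← hr]
          simp
        have hb : b = false := by
          have : b ∈ List.replicate (m-i) false := by rw [h3]; simp
          exact List.eq_of_mem_replicate this
        subst hb
        have h4 : w' ++ [false] <+: v := ⟨r', by rw [← hr]; simp⟩
        exact no_dyck_false_prefix hvD hw' h4
  subst hieq
  have hdrop0 : pre'.drop i = [] := by
    apply List.length_eq_zero_iff.mp
    rw [List.length_drop, hlen']
    omega
  have hpre' : pre = pre' := by rw [hpre, ← List.take_append_drop i pre', hdrop0]; simp
  refine ⟨rfl, hpre', ?_⟩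
  rw [hdrop0, Bl_nil] at hX
  simp only [List.nil_append] at hX
  exact List.append_cancel_right hX

lemma pair_unique (m : ℕ) {i i' : ℕ} (hi : i ≤ m) (hi' : i' ≤ m)
    {pre pre' : List (List Bool)} (hlen : pre.length = i) (hlen' : pre'.length = i')
    (hd : ∀ v ∈ pre, IsDyck m v) (hd' : ∀ v ∈ pre', IsDyck m v)
    {w' w'' : List Bool} (hw' : IsDyck m w') (hnw' : w' ≠ [])
    (hw'' : IsDyck m w'') (hnw'' : w'' ≠ [])
    (heq : Bl pre ++ w' ++ List.replicate (m - i) false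
         = Bl pre' ++ w'' ++ List.replicate (m - i') false) :
    i = i' ∧ pre = pre' ∧ w' = w'' := by
  rcases le_or_gt i i' with h | h
  · exact pair_unique_aux m hi hi' h hlen hlen' hd hd' hw' hnw' hw'' hnw'' heq
  · obtain ⟨h1, h2, h3⟩ := pair_unique_aux m hi' hi h.le hlen' hlen hd' hd hw'' hnw'' hw' hnw' heq.symm
    exact ⟨h1.symm, h2.symm, h3.symm⟩




lemma Dpath_shape (m : ℕ) (ws : Fin (m+1) → List Bool) :
    Dpath m ws = true :: (Bl (List.ofFn fun j : Fin m => ws j.castSucc) ++ ws (Fin.last m)) := by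
  unfold Dpath Bl
  rw [List.map_ofFn]
  rfl

/-- generators are Dyck, generally Dpath with Dyck components -/
lemma dpath_dyck (m : ℕ) (ws : Fin (m+1) → List Bool) (h : ∀ j, IsDyck m (ws j)) :
    IsDyck m (Dpath m ws) := by
  rw [Dpath_shape]
  apply dyck_word
  · simp
  · intro v hv
    rw [List.mem_ofFn] at hv
    obtain ⟨j, rfl⟩ := hv
    exact h _
  · exact h _

/-- the key extensionality lemma: canonical word form of a generator -/
lemma key_ext (m : ℕ) (i : ℕ) (hi : i ≤ m) (pre : List (List Bool)) (hlen : pre.length = i)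
    (ws : Fin (m+1) → List Bool)
    (h1 : ∀ (j : ℕ) (hj : j < i), ws ⟨j, by omega⟩ = pre[j]'(by omega))
    (h2 : ws ⟨i, by omega⟩ = peakWord m)
    (h3 : ∀ j : Fin (m+1), i < (j : ℕ) → ws j = []) :
    Dpath m ws = true :: (Bl pre ++ true :: List.replicate (2*m - i) false) := by
  rw [Dpath_shape]
  rcases Nat.lt_or_ge i m with him | him
  · -- i < m
    have hofn : (List.ofFn fun j : Fin m => ws j.castSucc)
        = pre ++ peakWord m :: List.replicate (m - 1 - i) [] := by
      apply List.ext_getElem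
      · simp [hlen]; omega
      · intro k hk1 hk2
        rw [List.getElem_ofFn]
        rcases Nat.lt_trichotomy k i with hki | hki | hki
        · rw [List.getElem_append_left (by omega)]
          exact h1 k hki
        · subst hki
          rw [List.getElem_append_right (by omega)]
          have hkp : k - pre.length = 0 := by omega
          rw [List.getElem_cons, dif_pos hkp]
          exact h2
        · rw [List.getElem_append_right (by omega)]
          have hk3 : k - pre.length ≠ 0 := by omega
          rw [List.getElem_cons, dif_neg hk3, List.getElem_replicate]
          apply h3
          simpa using hki
    have hlast : ws (Fin.last m) = [] := by
      apply h3
      simp [Fin.last]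
      omega
    rw [hofn, hlast, Bl_append, Bl_cons, Bl_replicate_nil]
    simp only [peakWord, List.append_nil, List.append_assoc, List.cons_append]
    congr 3
    rw [show (false :: List.replicate (m-1-i) false : List Bool)
        = List.replicate (m-1-i+1) false from rfl, ← List.replicate_add]
    congr 1
    omega
  · -- i = m
    have him' : i = m := by omega
    have hofn : (List.ofFn fun j : Fin m => ws j.castSucc) = pre := by
      apply List.ext_getElem
      · simp [hlen, him']
      · intro k hk1 hk2
        rw [List.getElem_ofFn]
        exact h1 k (by simp at hk1; omega)
    have hlast : ws (Fin.last m) = peakWord m := by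
      have hl2 : (Fin.last m) = (⟨i, by omega⟩ : Fin (m+1)) := by
        apply Fin.ext
        simp [him']
      rw [hl2, h2]
    rw [hofn, hlast]
    have h2m : 2*m - i = m := by omega
    rw [h2m]
    rfl

/-- shape from IsGenerator -/
lemma gen_shape {m : ℕ} {g : List Bool} (hg : IsGenerator m g) :
    ∃ (i : ℕ) (pre : List (List Bool)), i ≤ m ∧ pre.length = i ∧
      (∀ v ∈ pre, IsDyck m v) ∧
      g = true :: (Bl pre ++ true :: List.replicate (2*m - i) false) := by
  obtain ⟨i, ws, hws, hpeak, hgt, rfl⟩ := hg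
  refine ⟨(i : ℕ), List.ofFn (fun j : Fin (i : ℕ) => ws ⟨(j : ℕ), by omega⟩), by omega, by simp, ?_, ?_⟩
  · intro v hv
    rw [List.mem_ofFn] at hv
    obtain ⟨j, rfl⟩ := hv
    exact hws _
  · apply key_ext m (i : ℕ) (by omega) _ (by simp) ws
    · intro j hj
      rw [List.getElem_ofFn]
    · exact hpeak
    · intro j hj
      apply hgt
      exact Fin.lt_def.mpr hj

/-- IsGenerator from shape -/
lemma gen_of_shape (m : ℕ) (i : ℕ) (hi : i ≤ m) (pre : List (List Bool))
    (hlen : pre.length = i) (hd : ∀ v ∈ pre, IsDyck m v) :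
    IsGenerator m (true :: (Bl pre ++ true :: List.replicate (2*m - i) false)) := by
  classical
  refine ⟨⟨i, by omega⟩, fun j => if h : (j : ℕ) < i then pre[(j : ℕ)]'(by omega)
    else if (j : ℕ) = i then peakWord m else [], ?_, ?_, ?_, ?_⟩
  · intro j
    by_cases h : (j : ℕ) < i
    · simp only [dif_pos h]
      exact hd _ (List.getElem_mem _)
    · by_cases h' : (j : ℕ) = i
      · simp only [dif_neg h, if_pos h']
        exact peak_dyck m
      · simp only [dif_neg h, if_neg h']
        exact empty_dyck m
  · simp
  · intro j hj
    have hj' : i < (j : ℕ) := Fin.lt_def.mp hj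
    simp only [dif_neg (by omega : ¬ (j : ℕ) < i), if_neg (by omega : ¬ (j : ℕ) = i)]
  · symm
    apply key_ext m i hi pre hlen
    · intro j hj
      simp [hj]
    · simp
    · intro j hj
      simp only [dif_neg (by omega : ¬ (j : ℕ) < i), if_neg (by omega : ¬ (j : ℕ) = i)]




lemma gen_dyck {m : ℕ} {g : List Bool} (hg : IsGenerator m g) :
    IsDyck m g ∧ g ≠ [] := by
  obtain ⟨i, ws, hws, -, -, rfl⟩ := hg
  exact ⟨dpath_dyck m ws hws, by simp [Dpath]⟩

lemma peak_ne (m : ℕ) : peakWord m ≠ [] := by simp [peakWord]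

lemma fold_dyck {m : ℕ} (L : List (List Bool)) (h : ∀ g ∈ L, IsGenerator m g) :
    IsDyck m (L.foldr (star m) (peakWord m)) ∧ L.foldr (star m) (peakWord m) ≠ [] := by
  induction L with
  | nil => exact ⟨peak_dyck m, peak_ne m⟩
  | cons g T ih =>
    obtain ⟨hT1, hT2⟩ := ih (fun x hx => h x (by simp [hx]))
    obtain ⟨hg1, hg2⟩ := gen_dyck (h g (by simp))
    exact star_closure hg1 hg2 hT1 hT2

/-- computing star of a generator in shape form -/
lemma star_gen (m : ℕ) (i : ℕ) (hi : i ≤ m) (pre : List (List Bool)) (v : List Bool) :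
    star m (true :: (Bl pre ++ true :: List.replicate (2*m - i) false)) v
      = true :: (Bl pre ++ (v ++ List.replicate (m - i) false)) := by
  have h : (true :: (Bl pre ++ true :: List.replicate (2*m - i) false))
      = (true :: Bl pre) ++ true :: List.replicate (2*m - i) false := by simp
  rw [h, star_shape]
  have : 2*m - i - m = m - i := by omega
  rw [this]
  simp

/-- split a list of lists at its last nonempty entry -/
lemma last_nonempty {M : List (List Bool)} (h : ¬ ∀ x ∈ M, x = []) :
    ∃ P v S, M = P ++ v :: S ∧ v ≠ [] ∧ ∀ x ∈ S, x = [] := by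
  classical
  induction M with
  | nil => simp at h
  | cons a T ih =>
    by_cases hT : ∀ x ∈ T, x = []
    · have ha : a ≠ [] := by
        intro ha
        apply h
        intro x hx
        rcases List.mem_cons.mp hx with rfl | hx'
        · exact ha
        · exact hT x hx'
      exact ⟨[], a, T, by simp, ha, hT⟩
    · obtain ⟨P, v, S, rfl, hv, hS⟩ := ih hT
      exact ⟨a :: P, v, S, by simp, hv, hS⟩

/-- existence of one-step factorization -/
lemma exists_step {m : ℕ} (hm : 1 ≤ m) {w : List Bool} (hw : IsDyck m w) (hne : w ≠ [])
    (hnp : w ≠ peakWord m) :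
    ∃ (i : ℕ) (pre : List (List Bool)) (v : List Bool), i ≤ m ∧ pre.length = i ∧
      (∀ x ∈ pre, IsDyck m x) ∧ IsDyck m v ∧ v ≠ [] ∧
      w = true :: (Bl pre ++ (v ++ List.replicate (m - i) false)) := by
  obtain ⟨L, vl, hlen, hL, hvl, rfl⟩ := dyck_decomp hw hne
  have hnall : ¬ ∀ x ∈ L ++ [vl], x = [] := by
    intro hall
    apply hnp
    have hvl0 : vl = [] := hall vl (by simp)
    have hL0 : L = List.replicate m [] := by
      rw [← hlen]
      exact List.eq_replicate_of_mem (fun x hx => hall x (by simp [hx]))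
    rw [hL0, Bl_replicate_nil, hvl0]
    simp [peakWord]
  obtain ⟨P, v, S, hsplit, hv, hS⟩ := last_nonempty hnall
  have hPlen : P.length ≤ m := by
    have := congrArg List.length hsplit
    simp [hlen] at this
    omega
  have hSlen : P.length + 1 + S.length = m + 1 := by
    have := congrArg List.length hsplit
    simp [hlen] at this
    omega
  have hPd : ∀ x ∈ P, IsDyck m x := by
    intro x hx
    have hx2 : x ∈ L ++ [vl] := by rw [hsplit]; simp [hx]
    rcases List.mem_append.mp hx2 with h' | h'
    · exact hL x h'
    · simp at h'; subst h'; exact hvl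
  have hvd : IsDyck m v := by
    have hx2 : v ∈ L ++ [vl] := by rw [hsplit]; simp
    rcases List.mem_append.mp hx2 with h' | h'
    · exact hL v h'
    · simp at h'; subst h'; exact hvl
  refine ⟨P.length, P, v, hPlen, rfl, hPd, hvd, hv, ?_⟩
  rcases S.eq_nil_or_concat with rfl | ⟨S', e, rfl⟩
  all_goals try rw [List.concat_eq_append] at hsplit hS hSlen
  · -- S = [], so P = L, v = vl
    have hPL : P = L ∧ v = vl := by
      have h2 : P ++ [v] = L ++ [vl] := by simpa using hsplit.symm
      constructor
      · exact (List.append_inj' h2 rfl).1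
      · have := (List.append_inj' h2 rfl).2
        simpa using this
    obtain ⟨rfl, rfl⟩ := hPL
    have h0 : m - P.length = 0 := by simp at hSlen; omega
    rw [h0]
    simp
  · -- S = S' ++ [e], e = vl, L = P ++ v :: S'
    have he : e = [] := hS e (by simp)
    have hS' : ∀ x ∈ S', x = [] := fun x hx => hS x (by simp [hx])
    have h2 : (P ++ v :: S') ++ [e] = L ++ [vl] := by
      rw [hsplit]
      simp
    have hPL : P ++ v :: S' = L ∧ e = vl := by
      constructor
      · exact (List.append_inj' h2 rfl).1
      · have := (List.append_inj' h2 rfl).2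
        simpa using this
    obtain ⟨hL2, rfl⟩ := hPL
    rw [← hL2, he]
    rw [Bl_append, Bl_cons]
    have hS'rep : S' = List.replicate S'.length [] :=
      List.eq_replicate_of_mem hS'
    rw [hS'rep, Bl_replicate_nil]
    have hms : m - P.length = S'.length + 1 := by
      have := congrArg List.length hL2
      simp [hlen] at this
      omega
    rw [hms]
    simp [List.replicate_succ]




lemma ct_form (pre : List (List Bool)) (v : List Bool) (s : ℕ) :
    (true :: (Bl pre ++ (v ++ List.replicate s false))).count true
      = 1 + (Bl pre).count true + v.count true := by
  simp [List.count_cons, List.count_append, List.count_replicate]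
  omega

lemma main_induction (m : ℕ) (hm : 1 ≤ m) : ∀ n : ℕ, ∀ w : List Bool, w.count true ≤ n →
    IsDyck m w → w ≠ [] →
    (∃ L : List (List Bool), (∀ g ∈ L, IsGenerator m g) ∧
        L.foldr (star m) (peakWord m) = w) ∧
    (∀ L₁ L₂ : List (List Bool),
      ((∀ g ∈ L₁, IsGenerator m g) ∧ L₁.foldr (star m) (peakWord m) = w) →
      ((∀ g ∈ L₂, IsGenerator m g) ∧ L₂.foldr (star m) (peakWord m) = w) → L₁ = L₂) := by
  intro n
  induction n with
  | zero =>
    intro w hn hw hne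
    have := ct_pos hw hne
    omega
  | succ n ih =>
    intro w hn hw hne
    by_cases hp : w = peakWord m
    · subst hp
      constructor
      · exact ⟨[], by simp, rfl⟩
      · -- uniqueness: only [] works
        have honly : ∀ L : List (List Bool), (∀ g ∈ L, IsGenerator m g) →
            L.foldr (star m) (peakWord m) = peakWord m → L = [] := by
          intro L hL hfold
          rcases L with _ | ⟨g, T⟩
          · rfl
          · exfalso
            have hr := fold_dyck T (fun x hx => hL x (by simp [hx]))
            obtain ⟨i, pre, hi, hlen, hd, hgeq⟩ := gen_shape (hL g (by simp))
            have hfold' : star m g (T.foldr (star m) (peakWord m)) = peakWord m := by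
              simpa using hfold
            rw [hgeq, star_gen m i hi] at hfold'
            have hct := congrArg (List.count true) hfold'
            rw [ct_form] at hct
            have h1 : 1 ≤ (T.foldr (star m) (peakWord m)).count true :=
              ct_pos hr.1 hr.2
            have h2 : (peakWord m).count true = 1 := by
              simp [peakWord, List.count_cons, List.count_replicate]
            omega
        intro L₁ L₂ h₁ h₂
        rw [honly L₁ h₁.1 h₁.2, honly L₂ h₂.1 h₂.2]
    · obtain ⟨i, pre, v, hi, hlen, hd, hvd, hvne, hweq⟩ := exists_step hm hw hne hp
      have hctv : v.count true ≤ n := by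
        have := hweq ▸ hn
        rw [ct_form] at this
        have := ct_pos hvd hvne
        omega
      obtain ⟨⟨Lv, hLv1, hLv2⟩, huniqv⟩ := ih v hctv hvd hvne
      constructor
      · refine ⟨(true :: (Bl pre ++ true :: List.replicate (2*m - i) false)) :: Lv, ?_, ?_⟩
        · intro g hg
          rcases List.mem_cons.mp hg with rfl | hg'
          · exact gen_of_shape m i hi pre hlen hd
          · exact hLv1 g hg'
        · show star m _ (Lv.foldr (star m) (peakWord m)) = w
          rw [hLv2, star_gen m i hi, hweq]
      · intro L₁ L₂ h₁ h₂
        rcases L₁ with _ | ⟨g₁, T₁⟩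
        · exact absurd h₁.2.symm hp
        rcases L₂ with _ | ⟨g₂, T₂⟩
        · exact absurd h₂.2.symm hp
        have hr₁ := fold_dyck T₁ (fun x hx => h₁.1 x (by simp [hx]))
        have hr₂ := fold_dyck T₂ (fun x hx => h₂.1 x (by simp [hx]))
        obtain ⟨i₁, pre₁, hi₁, hlen₁, hd₁, hg₁⟩ := gen_shape (h₁.1 g₁ (by simp))
        obtain ⟨i₂, pre₂, hi₂, hlen₂, hd₂, hg₂⟩ := gen_shape (h₂.1 g₂ (by simp))
        have hf₁ : star m g₁ (T₁.foldr (star m) (peakWord m)) = w := by simpa using h₁.2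
        have hf₂ : star m g₂ (T₂.foldr (star m) (peakWord m)) = w := by simpa using h₂.2
        rw [hg₁, star_gen m i₁ hi₁] at hf₁
        rw [hg₂, star_gen m i₂ hi₂] at hf₂
        have heq2 : Bl pre₁ ++ T₁.foldr (star m) (peakWord m) ++ List.replicate (m - i₁) false
            = Bl pre₂ ++ T₂.foldr (star m) (peakWord m) ++ List.replicate (m - i₂) false := by
          have := hf₁.trans hf₂.symm
          simp only [List.cons.injEq, List.append_assoc] at this ⊢
          exact this.2
        obtain ⟨hii, hpp, hrr⟩ := pair_unique m hi₁ hi₂ hlen₁ hlen₂ hd₁ hd₂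
          hr₁.1 hr₁.2 hr₂.1 hr₂.2 heq2
        have hT : T₁ = T₂ := by
          apply huniqv
          · refine ⟨fun x hx => h₁.1 x (by simp [hx]), ?_⟩
            -- foldr T₁ = v
            have : star m g₁ (T₁.foldr (star m) (peakWord m)) = w := by simpa using h₁.2
            rw [hg₁, star_gen m i₁ hi₁, hweq] at this
            have h3 : Bl pre₁ ++ T₁.foldr (star m) (peakWord m) ++ List.replicate (m - i₁) false
                = Bl pre ++ v ++ List.replicate (m - i) false := by
              simp only [List.cons.injEq, List.append_assoc] at this ⊢
              exact this.2
            obtain ⟨-, -, h4⟩ := pair_unique m hi₁ hi hlen₁ hlen hd₁ hd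
              hr₁.1 hr₁.2 hvd hvne h3
            exact h4
          · refine ⟨fun x hx => h₂.1 x (by simp [hx]), ?_⟩
            have : star m g₂ (T₂.foldr (star m) (peakWord m)) = w := by simpa using h₂.2
            rw [hg₂, star_gen m i₂ hi₂, hweq] at this
            have h3 : Bl pre₂ ++ T₂.foldr (star m) (peakWord m) ++ List.replicate (m - i₂) false
                = Bl pre ++ v ++ List.replicate (m - i) false := by
              simp only [List.cons.injEq, List.append_assoc] at this ⊢
              exact this.2
            obtain ⟨-, -, h4⟩ := pair_unique m hi₂ hi hlen₂ hlen hd₂ hd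
              hr₂.1 hr₂.2 hvd hvne h3
            exact h4
        have hg : g₁ = g₂ := by
          rw [hg₁, hg₂, hpp, hii]
        rw [hg, hT]


end DyckAux

/-- The set `D_m` of nonempty `m`-Dyck words, equipped with the
product `*`, is a monoid with unit `1·0^m`, free on the generators
`D(w₁,…,w_{i−1}, 1·0^m, ∅,…,∅)`: every element has a unique factorisation as a
product of generators. -/
theorem dyck_star_free_monoid (m : ℕ) (hm : 1 ≤ m) :
    -- closure
    (∀ w₁ w₂ : List Bool, IsDyck m w₁ → w₁ ≠ [] → IsDyck m w₂ → w₂ ≠ [] →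
        IsDyck m (star m w₁ w₂) ∧ star m w₁ w₂ ≠ []) ∧
    -- unit laws
    (∀ w : List Bool, IsDyck m w → w ≠ [] →
        star m (peakWord m) w = w ∧ star m w (peakWord m) = w) ∧
    -- associativity
    (∀ a b c : List Bool, IsDyck m a → a ≠ [] → IsDyck m b → b ≠ [] →
        IsDyck m c → c ≠ [] → star m (star m a b) c = star m a (star m b c)) ∧
    -- the generators are nonempty `m`-Dyck words
    (∀ g : List Bool, IsGenerator m g → IsDyck m g ∧ g ≠ []) ∧
    -- unique factorisation into generators
    (∀ w : List Bool, IsDyck m w → w ≠ [] →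
        ∃! L : List (List Bool),
          (∀ g ∈ L, IsGenerator m g) ∧ L.foldr (star m) (peakWord m) = w) := by
  refine ⟨?_, ?_, ?_, ?_, ?_⟩
  · intro w₁ w₂ h1 hn1 h2 hn2
    exact DyckAux.star_closure h1 hn1 h2 hn2
  · intro w hw hne
    exact ⟨DyckAux.star_peak_left, DyckAux.star_peak_right hw hne⟩
  · intro a b c ha hna hb hnb hc hnc
    exact DyckAux.star_assoc ha hna hb hnb
  · intro g hg
    exact DyckAux.gen_dyck hg
  · intro w hw hne
    obtain ⟨⟨L, hL1, hL2⟩, huniq⟩ :=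
      DyckAux.main_induction m hm (w.count true) w le_rfl hw hne
    exact ⟨L, ⟨hL1, hL2⟩, fun L' hL' => huniq L' L hL' ⟨hL1, hL2⟩⟩
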